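/- arXiv:2007.15102 — 5 statements merged into one kernel-verified Lean document; each statement's English description precedes it below -/
import Mathlib

section
/- Let G be a graph on n vertices admitting a simultaneous 1-stack 1-queue layout with respect to a vertex order σ = (v_1, ..., v_n); that is, no two edges cross and no two edges nest in σ. Then G has pathwidth at most 2. Moreover, there is a path decomposition with n bags B_1, ..., B_n such that |B_x| ≤ 3 and v_x ∈ B_x for all x. -/
section Aux
variable {n : ℕ} {G : SimpleGraph (Fin n)}

/-- Two distinct vertices cannot both be "minimal left endpoint of an edge reaching past `j`". -/
lemma aux_A_unique
    (hcross : ∀ u v x y : Fin n, G.Adj u v → G.Adj x y → u < v → x < y →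
      ¬ (u < x ∧ x < v ∧ v < y))
    (hnest : ∀ u v x y : Fin n, G.Adj u v → G.Adj x y → u < v → x < y →
      ¬ (u < x ∧ x < y ∧ y < v))
    (j x₁ x₂ : Fin n) (h12 : x₁ < x₂)
    (h1 : x₁ < j ∧ ∃ v, G.Adj x₁ v ∧ j ≤ v ∧ ∀ u, G.Adj u v → u < v → x₁ ≤ u)
    (h2 : x₂ < j ∧ ∃ v, G.Adj x₂ v ∧ j ≤ v ∧ ∀ u, G.Adj u v → u < v → x₂ ≤ u) :
    False := by
  obtain ⟨hx1j, v₁, hadj1, hjv1, hmin1⟩ := h1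
  obtain ⟨hx2j, v₂, hadj2, hjv2, hmin2⟩ := h2
  have hx2v1 : x₂ < v₁ := lt_of_lt_of_le hx2j hjv1
  have hx1v1 : x₁ < v₁ := lt_trans h12 hx2v1
  have hx2v2 : x₂ < v₂ := lt_of_lt_of_le hx2j hjv2
  rcases lt_trichotomy v₁ v₂ with h | h | h
  · exact hcross x₁ v₁ x₂ v₂ hadj1 hadj2 hx1v1 hx2v2 ⟨h12, hx2v1, h⟩
  · subst h
    exact absurd (hmin2 x₁ hadj1 hx1v1) (not_le.mpr h12)
  · exact hnest x₁ v₁ x₂ v₂ hadj1 hadj2 hx1v1 hx2v2 ⟨h12, hx2v2, h⟩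

/-- Two distinct vertices cannot both have two left-neighbors `≤ j`. -/
lemma aux_C_unique
    (hcross : ∀ u v x y : Fin n, G.Adj u v → G.Adj x y → u < v → x < y →
      ¬ (u < x ∧ x < v ∧ v < y))
    (hnest : ∀ u v x y : Fin n, G.Adj u v → G.Adj x y → u < v → x < y →
      ¬ (u < x ∧ x < y ∧ y < v))
    (j x₁ x₂ : Fin n) (h12 : x₁ < x₂)
    (h1 : j < x₁ ∧ ∃ a b, G.Adj a x₁ ∧ G.Adj b x₁ ∧ a < b ∧ b ≤ j)
    (h2 : j < x₂ ∧ ∃ a b, G.Adj a x₂ ∧ G.Adj b x₂ ∧ a < b ∧ b ≤ j) :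
    False := by
  obtain ⟨hjx1, a₁, b₁, ha1, hb1, hab1, hb1j⟩ := h1
  obtain ⟨hjx2, a₂, b₂, ha2, hb2, hab2, hb2j⟩ := h2
  have hb1x1 : b₁ < x₁ := lt_of_le_of_lt hb1j hjx1
  have hb2x1 : b₂ < x₁ := lt_of_le_of_lt hb2j hjx1
  have hb2x2 : b₂ < x₂ := lt_trans hb2x1 h12
  have hb1x2 : b₁ < x₂ := lt_trans hb1x1 h12
  have ha1x1 : a₁ < x₁ := lt_trans hab1 hb1x1
  rcases lt_trichotomy b₁ b₂ with h | h | h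
  · exact hcross b₁ x₁ b₂ x₂ hb1 hb2 hb1x1 hb2x2 ⟨h, hb2x1, h12⟩
  · subst h
    exact hcross a₁ x₁ b₁ x₂ ha1 hb2 ha1x1 hb2x2 ⟨hab1, hb1x1, h12⟩
  · exact hnest b₂ x₂ b₁ x₁ hb2 hb1 hb2x2 hb1x1 ⟨h, hb1x1, h12⟩

end Aux

/-- Lemma 4: if no two edges of `G` cross and no two edges nest with respect to
the vertex order `v_1 < ⋯ < v_n` (vertices are `Fin n` with its natural order),
then `G` has a path decomposition with `n` bags `B_1, …, B_n` such that
`|B_x| ≤ 3` and `v_x ∈ B_x`; in particular the pathwidth of `G` is at most 2. -/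
theorem simultaneous_one_stack_one_queue_pathwidth (n : ℕ) (G : SimpleGraph (Fin n))
    (hcross : ∀ u v x y : Fin n, G.Adj u v → G.Adj x y → u < v → x < y →
      ¬ (u < x ∧ x < v ∧ v < y))
    (hnest : ∀ u v x y : Fin n, G.Adj u v → G.Adj x y → u < v → x < y →
      ¬ (u < x ∧ x < y ∧ y < v)) :
    ∃ B : Fin n → Finset (Fin n),
      (∀ u v : Fin n, G.Adj u v → ∃ i, u ∈ B i ∧ v ∈ B i) ∧
      (∀ (v i j k : Fin n), i ≤ j → j ≤ k → v ∈ B i → v ∈ B k → v ∈ B j) ∧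
      (∀ x, (B x).card ≤ 3) ∧
      (∀ x, x ∈ B x) := by
  classical
  set P : Fin n → Fin n → Prop := fun j x =>
    x < j ∧ ∃ v, G.Adj x v ∧ j ≤ v ∧ ∀ u, G.Adj u v → u < v → x ≤ u with hP
  set Q : Fin n → Fin n → Prop := fun j x =>
    j < x ∧ ∃ a b, G.Adj a x ∧ G.Adj b x ∧ a < b ∧ b ≤ j with hQ
  refine ⟨fun j => insert j
      ((Finset.univ.filter (P j)) ∪ (Finset.univ.filter (Q j))), ?_, ?_, ?_, ?_⟩
  · -- every edge is in some bag
    have key : ∀ u v : Fin n, G.Adj u v → u < v →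
        ∃ i, (u ∈ insert i ((Finset.univ.filter (P i)) ∪ (Finset.univ.filter (Q i)))) ∧
             (v ∈ insert i ((Finset.univ.filter (P i)) ∪ (Finset.univ.filter (Q i)))) := by
      intro u v huv hlt
      by_cases hm : ∀ w, G.Adj w v → w < v → u ≤ w
      · refine ⟨v, ?_, ?_⟩
        · simp only [Finset.mem_insert, Finset.mem_union, Finset.mem_filter,
            Finset.mem_univ, true_and, hP]
          exact Or.inr (Or.inl ⟨hlt, v, huv, le_refl v, hm⟩)
        · exact Finset.mem_insert_self v _
      · push_neg at hm
        obtain ⟨w, hwv, hwltv, hwu⟩ := hm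
        refine ⟨u, Finset.mem_insert_self u _, ?_⟩
        simp only [Finset.mem_insert, Finset.mem_union, Finset.mem_filter,
          Finset.mem_univ, true_and, hQ]
        exact Or.inr (Or.inr ⟨hlt, w, u, hwv, huv, hwu, le_refl u⟩)
    intro u v huv
    rcases huv.ne.lt_or_gt with hlt | hlt
    · exact key u v huv hlt
    · obtain ⟨i, hv, hu⟩ := key v u huv.symm hlt
      exact ⟨i, hu, hv⟩
  · -- contiguity
    intro v i j k hij hjk hvi hvk
    simp only [Finset.mem_insert, Finset.mem_union, Finset.mem_filter,
      Finset.mem_univ, true_and, hP, hQ] at hvi hvk ⊢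
    rcases lt_trichotomy v j with hvj | hvj | hvj
    · -- v < j : use the information at k (since v < j ≤ k)
      have hvk' : v < k := lt_of_lt_of_le hvj hjk
      rcases hvk with h | h | h
      · exact absurd h (ne_of_lt hvk')
      · obtain ⟨_, w, hadj, hkw, hmin⟩ := h
        exact Or.inr (Or.inl ⟨hvj, w, hadj, le_trans hjk hkw, hmin⟩)
      · exact absurd h.1 (not_lt.mpr (le_of_lt hvk'))
    · exact Or.inl hvj
    · -- j < v : use the information at i (since i ≤ j < v)
      have hvi' : i < v := lt_of_le_of_lt hij hvj
      rcases hvi with h | h | h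
      · exact absurd h.symm (ne_of_lt hvi')
      · exact absurd h.1 (not_lt.mpr (le_of_lt hvi'))
      · obtain ⟨_, a, b, ha, hb, hab, hbi⟩ := h
        exact Or.inr (Or.inr ⟨hvj, a, b, ha, hb, hab, le_trans hbi hij⟩)
  · -- card ≤ 3
    intro j
    have hA : (Finset.univ.filter (P j)).card ≤ 1 := by
      rw [Finset.card_le_one]
      intro x₁ hx₁ x₂ hx₂
      rw [Finset.mem_filter] at hx₁ hx₂
      by_contra hne
      rcases (Ne.lt_or_gt hne) with h | h
      · exact aux_A_unique hcross hnest j x₁ x₂ h hx₁.2 hx₂.2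
      · exact aux_A_unique hcross hnest j x₂ x₁ h hx₂.2 hx₁.2
    have hC : (Finset.univ.filter (Q j)).card ≤ 1 := by
      rw [Finset.card_le_one]
      intro x₁ hx₁ x₂ hx₂
      rw [Finset.mem_filter] at hx₁ hx₂
      by_contra hne
      rcases (Ne.lt_or_gt hne) with h | h
      · exact aux_C_unique hcross hnest j x₁ x₂ h hx₁.2 hx₂.2
      · exact aux_C_unique hcross hnest j x₂ x₁ h hx₂.2 hx₁.2
    calc (insert j ((Finset.univ.filter (P j)) ∪ (Finset.univ.filter (Q j)))).card
        ≤ ((Finset.univ.filter (P j)) ∪ (Finset.univ.filter (Q j))).card + 1 :=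
          Finset.card_insert_le _ _
      _ ≤ ((Finset.univ.filter (P j)).card + (Finset.univ.filter (Q j)).card) + 1 :=
          Nat.add_le_add_right (Finset.card_union_le _ _) 1
      _ ≤ (1 + 1) + 1 := Nat.add_le_add_right (Nat.add_le_add hA hC) 1
      _ = 3 := rfl
  · intro x
    exact Finset.mem_insert_self x _
end

section
/- Suppose a graph G admits a vertex order σ in which no two edges cross and no two edges nest. Then for any edge (v_i, v_n) where v_n is the last vertex of σ and v_i is the σ-smallest neighbor of v_n, every vertex x with v_i <_σ x <_σ v_n is adjacent to v_i, or adjacent to v_n, or isolated among the vertices between them (has no edge to any vertex other than v_i and v_n). -/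
/-- Key structural step of Lemma 4: in a vertex order with no two crossing and
no two nesting edges, if `vn` is the last vertex, `vi` its smallest neighbor,
then every vertex `x` strictly between `vi` and `vn` is adjacent to `vi`, or
adjacent to `vn`, or has no neighbor other than `vi` and `vn`. -/
theorem between_vertices_structure {V : Type*} [LinearOrder V] (G : SimpleGraph V)
    (hcross : ∀ u v x y : V, G.Adj u v → G.Adj x y → u < v → x < y →
      ¬ (u < x ∧ x < v ∧ v < y))
    (hnest : ∀ u v x y : V, G.Adj u v → G.Adj x y → u < v → x < y →
      ¬ (u < x ∧ x < y ∧ y < v))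
    (vi vn : V) (hlast : ∀ u : V, u ≤ vn) (hadj : G.Adj vi vn)
    (hmin : ∀ u : V, G.Adj u vn → vi ≤ u) :
    ∀ x : V, vi < x → x < vn →
      G.Adj vi x ∨ G.Adj x vn ∨ (∀ y : V, G.Adj x y → y = vi ∨ y = vn) := by
  intro x hvix hxvn
  right; right
  intro y hxy
  have hvivn : vi < vn := lt_of_lt_of_le hvix (le_of_lt hxvn)
  rcases lt_trichotomy x y with h | h | h
  · -- x < y ≤ vn
    rcases eq_or_lt_of_le (hlast y) with hy | hy
    · exact Or.inr hy
    · exact absurd ⟨hvix, h, hy⟩ (hnest vi vn x y hadj hxy hvivn h)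
  · exact absurd h (G.ne_of_adj hxy)
  · -- y < x
    rcases lt_trichotomy y vi with hy | hy | hy
    · exact absurd ⟨hy, hvix, hxvn⟩ (hcross y x vi vn hxy.symm hadj h hvivn)
    · exact Or.inl hy
    · exact absurd ⟨hy, h, hxvn⟩ (hnest vi vn y x hadj hxy.symm hvivn h)
end

section
/- Let G be a graph admitting a simultaneous s-stack q-queue layout. Then G has pathwidth at most 2·s·q. -/
set_option linter.unusedSectionVars false

namespace SimLayoutProof

variable {V : Type*} [Fintype V] [LinearOrder V] {s q : ℕ}

/-- `e` is an edge of color pair `c` spanning the gap just after vertex `g`. -/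
def Sp (G : SimpleGraph V) (sc : V × V → Fin s) (qc : V × V → Fin q)
    (c : Fin s × Fin q) (g : V) (e : V × V) : Prop :=
  G.Adj e.1 e.2 ∧ e.1 < e.2 ∧ sc e = c.1 ∧ qc e = c.2 ∧ e.1 ≤ g ∧ g < e.2

open Classical in
/-- Vertices common to all `c`-colored edges spanning gap `g` (when there is one). -/
noncomputable def CSet (G : SimpleGraph V) (sc : V × V → Fin s) (qc : V × V → Fin q)
    (c : Fin s × Fin q) (g : V) : Finset V :=
  Finset.univ.filter fun v =>
    (∃ e, Sp G sc qc c g e) ∧ ∀ e, Sp G sc qc c g e → v = e.1 ∨ v = e.2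

/-- The center of color `c` at gap `g`. -/
noncomputable def Cen (G : SimpleGraph V) (sc : V × V → Fin s) (qc : V × V → Fin q)
    (c : Fin s × Fin q) (g : V) : V :=
  if h : (CSet G sc qc c g).Nonempty then (CSet G sc qc c g).max' h else g

section Lemmas

variable {G : SimpleGraph V} {sc : V × V → Fin s} {qc : V × V → Fin q}
    (hsc : ∀ e f : V × V,
      (G.Adj e.1 e.2 ∧ e.1 < e.2) → (G.Adj f.1 f.2 ∧ f.1 < f.2) →
      sc e = sc f → ¬ (e.1 < f.1 ∧ f.1 < e.2 ∧ e.2 < f.2))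
    (hqc : ∀ e f : V × V,
      (G.Adj e.1 e.2 ∧ e.1 < e.2) → (G.Adj f.1 f.2 ∧ f.1 < f.2) →
      qc e = qc f → ¬ (e.1 < f.1 ∧ f.1 < f.2 ∧ f.2 < e.2))
    {c : Fin s × Fin q} {g : V}

include hsc hqc

/-- Two same-colored edges spanning a common gap share an endpoint. -/
theorem share {e f : V × V} (he : Sp G sc qc c g e) (hf : Sp G sc qc c g f) :
    e.1 = f.1 ∨ e.2 = f.2 := by
  obtain ⟨hea, hel, hes, heq, he1, he2⟩ := he
  obtain ⟨hfa, hfl, hfs, hfq, hf1, hf2⟩ := hf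
  rcases lt_trichotomy e.1 f.1 with h | h | h
  · rcases lt_trichotomy e.2 f.2 with h2 | h2 | h2
    · exact absurd ⟨h, lt_of_le_of_lt hf1 he2, h2⟩
        (hsc e f ⟨hea, hel⟩ ⟨hfa, hfl⟩ (hes.trans hfs.symm))
    · exact Or.inr h2
    · exact absurd ⟨h, hfl, h2⟩ (hqc e f ⟨hea, hel⟩ ⟨hfa, hfl⟩ (heq.trans hfq.symm))
  · exact Or.inl h
  · rcases lt_trichotomy f.2 e.2 with h2 | h2 | h2
    · exact absurd ⟨h, lt_of_le_of_lt he1 hf2, h2⟩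
        (hsc f e ⟨hfa, hfl⟩ ⟨hea, hel⟩ (hfs.trans hes.symm))
    · exact Or.inr h2.symm
    · exact absurd ⟨h, hel, h2⟩ (hqc f e ⟨hfa, hfl⟩ ⟨hea, hel⟩ (hfq.trans heq.symm))

theorem cset_nonempty {e0 : V × V} (he0 : Sp G sc qc c g e0) :
    (CSet G sc qc c g).Nonempty := by
  classical
  by_cases hall : ∀ f, Sp G sc qc c g f → f.1 = e0.1
  · exact ⟨e0.1, by
      simp only [CSet, Finset.mem_filter, Finset.mem_univ, true_and]
      exact ⟨⟨e0, he0⟩, fun f hf => Or.inl (hall f hf).symm⟩⟩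
  · push_neg at hall
    obtain ⟨f1, hf1, hne⟩ := hall
    have hf12 : f1.2 = e0.2 := by
      rcases share hsc hqc hf1 he0 with h | h
      · exact absurd h hne
      · exact h
    refine ⟨e0.2, by
      simp only [CSet, Finset.mem_filter, Finset.mem_univ, true_and]
      refine ⟨⟨e0, he0⟩, fun f hf => ?_⟩
      rcases share hsc hqc hf he0 with h | h
      · rcases share hsc hqc hf hf1 with h' | h'
        · exact absurd (h'.symm.trans h) (by intro hh; exact hne hh)
        · exact Or.inr (h'.trans hf12).symm
      · exact Or.inr h.symm⟩

theorem cen_spec {e0 : V × V} (he0 : Sp G sc qc c g e0) :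
    ∀ f, Sp G sc qc c g f → Cen G sc qc c g = f.1 ∨ Cen G sc qc c g = f.2 := by
  classical
  have hne := cset_nonempty hsc hqc he0
  have hmem := (CSet G sc qc c g).max'_mem hne
  simp only [CSet, Finset.mem_filter, Finset.mem_univ, true_and] at hmem
  intro f hf
  have : Cen G sc qc c g = (CSet G sc qc c g).max' hne := dif_pos hne
  rw [this]
  exact hmem.2 f hf

theorem le_cen {e0 : V × V} (he0 : Sp G sc qc c g e0) {w : V}
    (hw : ∀ f, Sp G sc qc c g f → w = f.1 ∨ w = f.2) : w ≤ Cen G sc qc c g := by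
  classical
  have hne := cset_nonempty hsc hqc he0
  have : Cen G sc qc c g = (CSet G sc qc c g).max' hne := dif_pos hne
  rw [this]
  exact Finset.le_max' _ w (by
    simp only [CSet, Finset.mem_filter, Finset.mem_univ, true_and]
    exact ⟨⟨e0, he0⟩, hw⟩)

omit hsc hqc in
theorem cen_cases :
    Cen G sc qc c g = g ∨ ((∃ e, Sp G sc qc c g e) ∧
      ∀ f, Sp G sc qc c g f → Cen G sc qc c g = f.1 ∨ Cen G sc qc c g = f.2) := by
  classical
  unfold Cen
  split_ifs with h
  · right
    have hmem := (CSet G sc qc c g).max'_mem h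
    simp only [CSet, Finset.mem_filter, Finset.mem_univ, true_and] at hmem
    exact hmem
  · left; rfl

/-- Left persistence: if the center at gap `g < v` is `v`, it stays `v`
on every gap between `g` and `v`. -/
theorem cen_left {v g'' : V} (hx : Cen G sc qc c g = v) (hgv : g < v)
    (h1 : g ≤ g'') (h2 : g'' < v) : Cen G sc qc c g'' = v := by
  rcases cen_cases (G := G) (sc := sc) (qc := qc) (c := c) (g := g) with h | ⟨⟨e0, he0⟩, hC⟩
  · rw [hx] at h; exact absurd h (ne_of_gt hgv)
  · have hv2 : v = e0.2 := by
      rcases hC e0 he0 with h | h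
      · rw [hx] at h; exact absurd h (by rintro rfl; exact absurd he0.2.2.2.2.1 (not_le.2 hgv))
      · rw [hx] at h; exact h
    have he0'' : Sp G sc qc c g'' e0 :=
      ⟨he0.1, he0.2.1, he0.2.2.1, he0.2.2.2.1, le_trans he0.2.2.2.2.1 h1, hv2 ▸ h2⟩
    have key : ∀ f, Sp G sc qc c g'' f → v = f.2 := by
      intro f hf
      rcases share hsc hqc hf he0'' with h | h
      · have hfg : Sp G sc qc c g f :=
          ⟨hf.1, hf.2.1, hf.2.2.1, hf.2.2.2.1, h ▸ he0.2.2.2.2.1,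
            lt_of_le_of_lt h1 hf.2.2.2.2.2⟩
        rcases hC f hfg with h' | h'
        · rw [hx] at h'
          exact absurd (h' ▸ hfg.2.2.2.2.1) (not_le.2 hgv)
        · rw [hx] at h'; exact h'
      · exact h ▸ hv2
    have hvle : v ≤ Cen G sc qc c g'' :=
      le_cen hsc hqc he0'' (fun f hf => Or.inr (key f hf))
    rcases cen_spec hsc hqc he0'' e0 he0'' with h | h
    · exact absurd (lt_of_le_of_lt (h ▸ hvle) (lt_of_le_of_lt he0.2.2.2.2.1 hgv))
        (lt_irrefl v)
    · exact h.trans hv2.symm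

/-- Right persistence: if the center at gap `g ≥ v` is `v`, it stays `v`
on every gap between `v` and `g`. -/
theorem cen_right {v g'' : V} (hx : Cen G sc qc c g = v) (hvg : v ≤ g)
    (h1 : v ≤ g'') (h2 : g'' ≤ g) : Cen G sc qc c g'' = v := by
  rcases cen_cases (G := G) (sc := sc) (qc := qc) (c := c) (g := g) with h | ⟨⟨e0, he0⟩, hC⟩
  · rw [hx] at h
    have : g'' = g := le_antisymm h2 (h ▸ h1)
    rw [this, hx]
  · have hv1 : v = e0.1 := by
      rcases hC e0 he0 with h | h
      · rw [hx] at h; exact h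
      · rw [hx] at h
        rw [h] at hvg
        exact absurd hvg (not_le.2 he0.2.2.2.2.2)
    have he0'' : Sp G sc qc c g'' e0 :=
      ⟨he0.1, he0.2.1, he0.2.2.1, he0.2.2.2.1, hv1 ▸ h1, lt_of_le_of_lt h2 he0.2.2.2.2.2⟩
    have key : ∀ f, Sp G sc qc c g'' f → v = f.1 := by
      intro f hf
      rcases share hsc hqc hf he0'' with h | h
      · exact h ▸ hv1
      · have hfg : Sp G sc qc c g f :=
          ⟨hf.1, hf.2.1, hf.2.2.1, hf.2.2.2.1, le_trans hf.2.2.2.2.1 h2,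
            h ▸ he0.2.2.2.2.2⟩
        rcases hC f hfg with h' | h'
        · rw [hx] at h'; exact h'
        · rw [hx] at h'
          rw [h', h] at hvg
          exact absurd hvg (not_le.2 he0.2.2.2.2.2)
    have hvle : v ≤ Cen G sc qc c g'' :=
      le_cen hsc hqc he0'' (fun f hf => Or.inl (key f hf))
    by_contra hne
    set w := Cen G sc qc c g'' with hw
    have hwgt : v < w := lt_of_le_of_ne hvle (fun hh => hne hh.symm)
    have hall2 : ∀ f, Sp G sc qc c g'' f → w = f.2 := by
      intro f hf
      rcases cen_spec hsc hqc he0'' f hf with h | h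
      · exact absurd (h.trans (key f hf).symm) (ne_of_gt hwgt)
      · exact h
    have hwe : w = e0.2 := hall2 e0 he0''
    -- w is not in CSet g, so there is a spanning edge at g missing w
    have hwnot : ¬ ∀ f, Sp G sc qc c g f → w = f.1 ∨ w = f.2 := by
      intro hcon
      have := le_cen hsc hqc he0 hcon
      rw [hx] at this
      exact absurd hwgt (not_lt.2 this)
    push_neg at hwnot
    obtain ⟨f', hf', hn1, hn2⟩ := hwnot
    have hvf1 : v = f'.1 := by
      rcases hC f' hf' with h | h
      · rw [hx] at h; exact h
      · rw [hx] at h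
        rw [h] at hvg
        exact absurd hvg (not_le.2 hf'.2.2.2.2.2)
    have hfo2 : g'' < f'.2 := by
      rcases lt_or_ge g'' f'.2 with h | h
      · exact h
      · exact absurd hf'.2.2.2.2.2 (not_lt.2 (le_trans h h2))
    have hf'' : Sp G sc qc c g'' f' :=
      ⟨hf'.1, hf'.2.1, hf'.2.2.1, hf'.2.2.2.1, hvf1 ▸ h1, hfo2⟩
    exact hn2 (hall2 f' hf'')

end Lemmas

noncomputable def Bag (G : SimpleGraph V) (sc : V × V → Fin s) (qc : V × V → Fin q)
    {m : ℕ} (em : Fin m ≃o V) (i : Fin m) : Finset V :=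
  insert (em i)
    ((Finset.univ.image fun c : Fin s × Fin q => Cen G sc qc c (em i)) ∪
      if h : 0 < i.val then
        Finset.univ.image fun c : Fin s × Fin q =>
          Cen G sc qc c (em ⟨i.val - 1, lt_of_le_of_lt (Nat.sub_le _ _) i.isLt⟩)
      else ∅)

theorem mem_Bag {G : SimpleGraph V} {sc : V × V → Fin s} {qc : V × V → Fin q}
    {m : ℕ} {em : Fin m ≃o V} {i : Fin m} {v : V} :
    v ∈ Bag G sc qc em i ↔ v = em i ∨ (∃ c, Cen G sc qc c (em i) = v) ∨
      (0 < i.val ∧ ∃ c, Cen G sc qc c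
        (em ⟨i.val - 1, lt_of_le_of_lt (Nat.sub_le _ _) i.isLt⟩) = v) := by
  classical
  simp only [Bag, Finset.mem_insert, Finset.mem_union]
  split_ifs with h
  · simp only [Finset.mem_image, Finset.mem_univ, true_and]
    tauto
  · simp only [Finset.mem_image, Finset.mem_univ, true_and, Finset.notMem_empty, or_false]
    tauto

theorem card_Bag {G : SimpleGraph V} {sc : V × V → Fin s} {qc : V × V → Fin q}
    {m : ℕ} {em : Fin m ≃o V} {i : Fin m} :
    (Bag G sc qc em i).card ≤ 2 * s * q + 1 := by
  classical
  have himg : ∀ g : V,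
      (Finset.univ.image fun c : Fin s × Fin q => Cen G sc qc c g).card ≤ s * q := by
    intro g
    refine le_trans Finset.card_image_le ?_
    simp [Finset.card_univ]
  have h2 : (if h : 0 < i.val then
        Finset.univ.image fun c : Fin s × Fin q =>
          Cen G sc qc c (em ⟨i.val - 1, lt_of_le_of_lt (Nat.sub_le _ _) i.isLt⟩)
      else ∅).card ≤ s * q := by
    split_ifs with h
    · exact himg _
    · simp
  have := Finset.card_union_le
    (Finset.univ.image fun c : Fin s × Fin q => Cen G sc qc c (em i))
    (if h : 0 < i.val then
        Finset.univ.image fun c : Fin s × Fin q =>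
          Cen G sc qc c (em ⟨i.val - 1, lt_of_le_of_lt (Nat.sub_le _ _) i.isLt⟩)
      else ∅)
  have hins := Finset.card_insert_le (em i)
    ((Finset.univ.image fun c : Fin s × Fin q => Cen G sc qc c (em i)) ∪
      if h : 0 < i.val then
        Finset.univ.image fun c : Fin s × Fin q =>
          Cen G sc qc c (em ⟨i.val - 1, lt_of_le_of_lt (Nat.sub_le _ _) i.isLt⟩)
      else ∅)
  have h1 := himg (em i)
  have hr : 2 * s * q = s * q + s * q := by ring
  unfold Bag
  omega

end SimLayoutProof

/-- Theorem 2: a graph admitting a simultaneous `s`-stack `q`-queue layout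
(with respect to the linear order on `V`) has pathwidth at most `2·s·q`,
i.e. it has a path decomposition all of whose bags have size at most
`2·s·q + 1`. -/
theorem simultaneous_layout_pathwidth {V : Type*} [Fintype V] [LinearOrder V]
    (G : SimpleGraph V) (s q : ℕ)
    (sc : V × V → Fin s)
    (hsc : ∀ e f : V × V,
      (G.Adj e.1 e.2 ∧ e.1 < e.2) → (G.Adj f.1 f.2 ∧ f.1 < f.2) →
      sc e = sc f → ¬ (e.1 < f.1 ∧ f.1 < e.2 ∧ e.2 < f.2))
    (qc : V × V → Fin q)
    (hqc : ∀ e f : V × V,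
      (G.Adj e.1 e.2 ∧ e.1 < e.2) → (G.Adj f.1 f.2 ∧ f.1 < f.2) →
      qc e = qc f → ¬ (e.1 < f.1 ∧ f.1 < f.2 ∧ f.2 < e.2)) :
    ∃ (m : ℕ) (B : Fin m → Finset V),
      (∀ u v : V, G.Adj u v → ∃ i, u ∈ B i ∧ v ∈ B i) ∧
      (∀ (v : V) (i j k : Fin m), i ≤ j → j ≤ k → v ∈ B i → v ∈ B k → v ∈ B j) ∧
      (∀ i, (B i).card ≤ 2 * s * q + 1) := by
  classical
  open SimLayoutProof in
  set em : Fin (Fintype.card V) ≃o V := monoEquivOfFin V rfl with hem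
  refine ⟨Fintype.card V, SimLayoutProof.Bag G sc qc em, ?_, ?_, ?_⟩
  · -- every edge is covered by some bag
    have key : ∀ a b : V, G.Adj a b → a < b →
        ∃ i, a ∈ SimLayoutProof.Bag G sc qc em i ∧ b ∈ SimLayoutProof.Bag G sc qc em i := by
      intro a b hab hlt
      set c : Fin s × Fin q := (sc (a, b), qc (a, b)) with hc
      have hSa : SimLayoutProof.Sp G sc qc c a (a, b) := ⟨hab, hlt, rfl, rfl, le_refl a, hlt⟩
      set ia := em.symm a with hia
      set ib := em.symm b with hib
      have hea : em ia = a := em.apply_symm_apply a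
      have heb : em ib = b := em.apply_symm_apply b
      have hiab : ia < ib := by
        rw [← em.lt_iff_lt, hea, heb]; exact hlt
      have hiabv : ia.val < ib.val := hiab
      by_cases hCab : SimLayoutProof.Cen G sc qc c a = b
      · refine ⟨ia, ?_, ?_⟩
        · exact SimLayoutProof.mem_Bag.2 (Or.inl hea.symm)
        · exact SimLayoutProof.mem_Bag.2 (Or.inr (Or.inl ⟨c, by rw [hea]; exact hCab⟩))
      · have hCaa : SimLayoutProof.Cen G sc qc c a = a := by
          rcases SimLayoutProof.cen_spec hsc hqc hSa (a, b) hSa with h | h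
          · exact h
          · exact absurd h hCab
        have hib0 : 0 < ib.val := by omega
        set ib1 : Fin (Fintype.card V) :=
          ⟨ib.val - 1, lt_of_le_of_lt (Nat.sub_le _ _) ib.isLt⟩ with hib1
        have hib1v : ib1.val = ib.val - 1 := by rw [hib1]
        have hib1lt : ib1 < ib := by
          rw [Fin.lt_def]; omega
        have hiaib1 : ia ≤ ib1 := by
          rw [Fin.le_def]; omega
        have hS1 : SimLayoutProof.Sp G sc qc c (em ib1) (a, b) := by
          refine ⟨hab, hlt, rfl, rfl, ?_, ?_⟩
          · rw [← hea]; exact em.le_iff_le.2 hiaib1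
          · rw [← heb]; exact em.lt_iff_lt.2 hib1lt
        by_cases h1 : SimLayoutProof.Cen G sc qc c (em ib1) = a
        · refine ⟨ib, ?_, ?_⟩
          · exact SimLayoutProof.mem_Bag.2 (Or.inr (Or.inr ⟨hib0, c, h1⟩))
          · exact SimLayoutProof.mem_Bag.2 (Or.inl heb.symm)
        · have h1b : SimLayoutProof.Cen G sc qc c (em ib1) = b := by
            rcases SimLayoutProof.cen_spec hsc hqc hS1 (a, b) hS1 with h | h
            · exact absurd h h1
            · exact h
          set S : Finset (Fin (Fintype.card V)) :=
            Finset.univ.filter (fun t => ia ≤ t ∧ t < ib ∧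
              SimLayoutProof.Cen G sc qc c (em t) = a) with hS
          have hSne : S.Nonempty := ⟨ia, by
            simp only [hS, Finset.mem_filter, Finset.mem_univ, true_and]
            exact ⟨le_refl ia, hiab, by rw [hea]; exact hCaa⟩⟩
          set j := S.max' hSne with hj
          have hjmem : j ∈ S := S.max'_mem hSne
          rw [hS] at hjmem
          simp only [Finset.mem_filter, Finset.mem_univ, true_and] at hjmem
          obtain ⟨hjia, hjib, hja⟩ := hjmem
          have hjne : j ≠ ib1 := by
            intro hcon
            rw [hcon] at hja
            rw [hja] at h1b
            exact hlt.ne h1b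
          have hjv : j.val + 1 ≤ ib.val - 1 := by
            have h1 : j.val < ib.val := hjib
            have h2 : j.val ≠ ib.val - 1 := fun hcon => hjne (Fin.ext hcon)
            omega
          set j' : Fin (Fintype.card V) := ⟨j.val + 1, by omega⟩ with hj'
          have hj'v : j'.val = j.val + 1 := by rw [hj']
          have hjj' : j < j' := by rw [Fin.lt_def]; omega
          have hSj' : SimLayoutProof.Sp G sc qc c (em j') (a, b) := by
            refine ⟨hab, hlt, rfl, rfl, ?_, ?_⟩
            · rw [← hea]
              exact em.le_iff_le.2 (le_trans hjia (le_of_lt hjj'))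
            · rw [← heb]
              exact em.lt_iff_lt.2 (by rw [Fin.lt_def]; omega)
          have hj'b : SimLayoutProof.Cen G sc qc c (em j') = b := by
            rcases SimLayoutProof.cen_spec hsc hqc hSj' (a, b) hSj' with h | h
            · exfalso
              have hj'S : j' ∈ S := by
                simp only [hS, Finset.mem_filter, Finset.mem_univ, true_and]
                exact ⟨le_trans hjia (le_of_lt hjj'), by rw [Fin.lt_def]; omega, h⟩
              have := S.le_max' j' hj'S
              rw [← hj] at this
              exact absurd (lt_of_lt_of_le hjj' this) (lt_irrefl j)
            · exact h
          refine ⟨j', ?_, ?_⟩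
          · refine SimLayoutProof.mem_Bag.2 (Or.inr (Or.inr ⟨by omega, c, ?_⟩))
            have : (⟨j'.val - 1, lt_of_le_of_lt (Nat.sub_le _ _) j'.isLt⟩ :
                Fin (Fintype.card V)) = j := Fin.ext (by simp only [Fin.val_mk]; omega)
            rw [this]
            exact hja
          · exact SimLayoutProof.mem_Bag.2 (Or.inr (Or.inl ⟨c, hj'b⟩))
    intro u v huv
    rcases lt_trichotomy u v with h | h | h
    · exact key u v huv h
    · exact absurd h huv.ne
    · obtain ⟨i, h1, h2⟩ := key v u huv.symm h
      exact ⟨i, h2, h1⟩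
  · -- convexity
    intro v i j k hij hjk hvi hvk
    set p := em.symm v with hp
    have hev : em p = v := em.apply_symm_apply v
    rcases eq_or_lt_of_le hij with rfl | hij'
    · exact hvi
    rcases eq_or_lt_of_le hjk with rfl | hjk'
    · exact hvk
    have hj0 : 0 < j.val := by
      have : i.val < j.val := hij'
      omega
    set j1 : Fin (Fintype.card V) :=
      ⟨j.val - 1, lt_of_le_of_lt (Nat.sub_le _ _) j.isLt⟩ with hj1
    have hj1v : j1.val = j.val - 1 := by rw [hj1]
    by_cases hjp : j ≤ p
    · -- use hvi and left persistence
      rcases SimLayoutProof.mem_Bag.1 hvi with h | ⟨c, hc⟩ | ⟨hi0, c, hc⟩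
      · exfalso
        have : p = i := by rw [hp, h, em.symm_apply_apply]
        rw [this] at hjp
        exact absurd (lt_of_lt_of_le hij' hjp) (lt_irrefl i)
      · have hip : i < p := lt_of_lt_of_le hij' hjp
        have hgv : em i < v := by rw [← hev]; exact em.lt_iff_lt.2 hip
        have h1 : em i ≤ em j1 := em.le_iff_le.2 (by
          rw [Fin.le_def]
          have : i.val < j.val := hij'
          omega)
        have h2 : em j1 < v := by
          rw [← hev]
          refine em.lt_iff_lt.2 ?_
          rw [Fin.lt_def]
          have : j.val ≤ p.val := hjp
          omega
        have := SimLayoutProof.cen_left hsc hqc hc hgv h1 h2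
        exact SimLayoutProof.mem_Bag.2 (Or.inr (Or.inr ⟨hj0, c, this⟩))
      · set i1 : Fin (Fintype.card V) :=
          ⟨i.val - 1, lt_of_le_of_lt (Nat.sub_le _ _) i.isLt⟩ with hi1
        have hi1v : i1.val = i.val - 1 := by rw [hi1]
        have hip : i1 < p := by
          rw [Fin.lt_def]
          have h1 : i.val < j.val := hij'
          have h2 : j.val ≤ p.val := hjp
          omega
        have hgv : em i1 < v := by rw [← hev]; exact em.lt_iff_lt.2 hip
        have h1 : em i1 ≤ em j1 := em.le_iff_le.2 (by
          rw [Fin.le_def]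
          have : i.val < j.val := hij'
          omega)
        have h2 : em j1 < v := by
          rw [← hev]
          refine em.lt_iff_lt.2 ?_
          rw [Fin.lt_def]
          have : j.val ≤ p.val := hjp
          omega
        have := SimLayoutProof.cen_left hsc hqc hc hgv h1 h2
        exact SimLayoutProof.mem_Bag.2 (Or.inr (Or.inr ⟨hj0, c, this⟩))
    · -- p < j : use hvk and right persistence
      have hpj : p < j := not_le.1 hjp
      rcases SimLayoutProof.mem_Bag.1 hvk with h | ⟨c, hc⟩ | ⟨hk0, c, hc⟩
      · exfalso
        have : p = k := by rw [hp, h, em.symm_apply_apply]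
        rw [this] at hpj
        exact absurd (lt_trans hpj hjk') (lt_irrefl k)
      · have hvg : v ≤ em k := by
          rw [← hev]
          exact em.le_iff_le.2 (le_of_lt (lt_trans hpj hjk'))
        have h1 : v ≤ em j := by
          rw [← hev]; exact em.le_iff_le.2 (le_of_lt hpj)
        have h2 : em j ≤ em k := em.le_iff_le.2 (le_of_lt hjk')
        have := SimLayoutProof.cen_right hsc hqc hc hvg h1 h2
        exact SimLayoutProof.mem_Bag.2 (Or.inr (Or.inl ⟨c, this⟩))
      · set k1 : Fin (Fintype.card V) :=
          ⟨k.val - 1, lt_of_le_of_lt (Nat.sub_le _ _) k.isLt⟩ with hk1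
        have hk1v : k1.val = k.val - 1 := by rw [hk1]
        have hvg : v ≤ em k1 := by
          rw [← hev]
          refine em.le_iff_le.2 ?_
          rw [Fin.le_def]
          have h1 : p.val < j.val := hpj
          have h2 : j.val < k.val := hjk'
          omega
        have h1 : v ≤ em j := by
          rw [← hev]; exact em.le_iff_le.2 (le_of_lt hpj)
        have h2 : em j ≤ em k1 := em.le_iff_le.2 (by
          rw [Fin.le_def]
          have : j.val < k.val := hjk'
          omega)
        have := SimLayoutProof.cen_right hsc hqc hc hvg h1 h2
        exact SimLayoutProof.mem_Bag.2 (Or.inr (Or.inl ⟨c, this⟩))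
  · intro i
    exact SimLayoutProof.card_Bag
end

section
/- If path decompositions P^1, ..., P^m of graphs G^1, ..., G^m on a common vertex set V all have the same index set (bags B_x^i indexed by x ∈ V with v_x ∈ B_x^i), then the bag-wise union {∪_i B_x^i : x ∈ V} is a path decomposition of the union graph (V, ∪_i E(G^i)), of width at most (Σ_i (width of P^i + 1)) - 1. -/
/-- Combination step of Theorem 2: if path decompositions of graphs
`G 1, …, G m` on a common (linearly ordered) vertex set `V` are all indexed by
`V` itself, with `x ∈ B i x` for every index `x`, then the bag-wise union is a
path decomposition of the union graph of width at most `(∑ i, (w i + 1)) - 1`. -/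
theorem union_of_path_decompositions {V : Type*} [Fintype V] [DecidableEq V]
    [LinearOrder V] (m : ℕ)
    (G : Fin m → SimpleGraph V) (B : Fin m → V → Finset V) (w : Fin m → ℕ)
    (hcov : ∀ (i : Fin m) (u v : V), (G i).Adj u v → ∃ x, u ∈ B i x ∧ v ∈ B i x)
    (hint : ∀ (i : Fin m) (v x y z : V), x ≤ y → y ≤ z →
      v ∈ B i x → v ∈ B i z → v ∈ B i y)
    (hself : ∀ (i : Fin m) (x : V), x ∈ B i x)
    (hwidth : ∀ (i : Fin m) (x : V), (B i x).card ≤ w i + 1) :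
    (∀ u v : V, (∃ i, (G i).Adj u v) →
      ∃ x, u ∈ Finset.univ.biUnion (fun i => B i x) ∧
           v ∈ Finset.univ.biUnion (fun i => B i x)) ∧
    (∀ (v x y z : V), x ≤ y → y ≤ z →
      v ∈ Finset.univ.biUnion (fun i => B i x) →
      v ∈ Finset.univ.biUnion (fun i => B i z) →
      v ∈ Finset.univ.biUnion (fun i => B i y)) ∧
    (∀ x : V, (Finset.univ.biUnion (fun i => B i x)).card ≤ ∑ i, (w i + 1)) := by
  refine ⟨?_, ?_, ?_⟩
  · rintro u v ⟨i, hadj⟩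
    obtain ⟨x, hu, hv⟩ := hcov i u v hadj
    exact ⟨x, Finset.mem_biUnion.2 ⟨i, Finset.mem_univ i, hu⟩,
      Finset.mem_biUnion.2 ⟨i, Finset.mem_univ i, hv⟩⟩
  · intro v x y z hxy hyz hx hz
    obtain ⟨i, -, hi⟩ := Finset.mem_biUnion.1 hx
    obtain ⟨j, -, hj⟩ := Finset.mem_biUnion.1 hz
    rcases le_total y v with h | h
    · exact Finset.mem_biUnion.2 ⟨i, Finset.mem_univ i, hint i v x y v hxy h hi (hself i v)⟩
    · exact Finset.mem_biUnion.2 ⟨j, Finset.mem_univ j, hint j v v y z h hyz (hself j v) hj⟩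
  · intro x
    calc (Finset.univ.biUnion (fun i => B i x)).card ≤ ∑ i, (B i x).card :=
          Finset.card_biUnion_le
      _ ≤ ∑ i, (w i + 1) := Finset.sum_le_sum fun i _ => hwidth i x
end

section
/- Let G be a graph with 2n vertices containing n independent edges (u_i, v_i), 1 ≤ i ≤ n. Suppose G admits an s-stack layout with vertex order σ in which u_1 < u_2 < ... < u_n < v_i for all i. Then there exist indices 1 ≤ j_1 < j_2 < ... < j_r ≤ n with r = ⌈n/s⌉ such that u_{j_1} < u_{j_2} < ... < u_{j_r} < v_{j_r} < ... < v_{j_2} < v_{j_1} in σ. -/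
/-- Lemma 6: if a graph `G` contains `n` independent edges `(u i, v i)` with
`u 1 < u 2 < ⋯ < u n < v i` for all `i` in the vertex order of an `s`-stack
layout, then there are `r = ⌈n/s⌉` indices `j 1 < ⋯ < j r` with
`u (j 1) < ⋯ < u (j r) < v (j r) < ⋯ < v (j 1)`. -/
theorem separated_matching_rainbow {V : Type*} [LinearOrder V] (G : SimpleGraph V)
    (n s : ℕ) (u v : Fin n → V)
    (hu : StrictMono u) (hv : Function.Injective v)
    (huv : ∀ i j : Fin n, u i < v j)
    (hadj : ∀ i : Fin n, G.Adj (u i) (v i))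
    (c : V × V → Fin s)
    (hc : ∀ e f : V × V,
      (G.Adj e.1 e.2 ∧ e.1 < e.2) → (G.Adj f.1 f.2 ∧ f.1 < f.2) →
      c e = c f → ¬ (e.1 < f.1 ∧ f.1 < e.2 ∧ e.2 < f.2)) :
    ∃ j : Fin ((n + s - 1) / s) → Fin n,
      StrictMono j ∧ StrictMono (fun a => u (j a)) ∧
      StrictAnti (fun a => v (j a)) ∧
      (∀ a b, u (j a) < v (j b)) := by
  rcases Nat.eq_zero_or_pos n with hn | hn
  · -- n = 0 : the required length is 0, so the empty map works
    subst hn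
    have hr : (0 + s - 1) / s = 0 := by
      rcases Nat.eq_zero_or_pos s with hs | hs
      · simp [hs]
      · exact Nat.div_eq_of_lt (by omega)
    have he : ∀ a : Fin ((0 + s - 1) / s), False := fun a => by
      rw [hr] at a; exact a.elim0
    exact ⟨fun a => (he a).elim, fun a => (he a).elim, fun a => (he a).elim,
      fun a => (he a).elim, fun a => (he a).elim⟩
  rcases Nat.eq_zero_or_pos s with hs | hs
  · have hx := c (u ⟨0, hn⟩, v ⟨0, hn⟩)
    subst hs; exact hx.elim0
  -- main case : n > 0, s > 0
  set r := (n + s - 1) / s with hrdef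
  set col : Fin n → Fin s := fun i => c (u i, v i) with hcol
  -- key nesting fact: same-colored edges are nested
  have key : ∀ i i' : Fin n, i < i' → col i = col i' → v i' < v i := by
    intro i i' hii hco
    by_contra h
    push_neg at h
    have hne : v i ≠ v i' := fun e => absurd (hv e) (Fin.ne_of_lt hii)
    have hlt : v i < v i' := lt_of_le_of_ne h hne
    exact hc (u i, v i) (u i', v i') ⟨hadj i, huv i i⟩ ⟨hadj i', huv i' i'⟩ hco
      ⟨hu hii, huv i' i, hlt⟩
  -- pigeonhole: some color class has at least r elements
  have hr1 : 1 ≤ r := Nat.one_le_div_iff hs |>.mpr (by omega)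
  have hpig : ∃ t : Fin s, r ≤ (Finset.univ.filter fun i => col i = t).card := by
    by_contra hcon
    push_neg at hcon
    have hsum : (Finset.univ : Finset (Fin n)).card =
        ∑ t : Fin s, (Finset.univ.filter fun i => col i = t).card :=
      Finset.card_eq_sum_card_fiberwise (fun i _ => Finset.mem_univ (col i))
    have hb : ∑ t : Fin s, (Finset.univ.filter fun i => col i = t).card ≤
        ∑ _t : Fin s, (r - 1) :=
      Finset.sum_le_sum fun t _ => by have := hcon t; omega
    have hb2 : ∑ _t : Fin s, (r - 1) = s * (r - 1) := by
      simp [Finset.sum_const, mul_comm]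
    have h1 : s * r ≤ n + s - 1 := by
      rw [mul_comm]; exact Nat.div_mul_le_self _ _
    have h3 : s * (r - 1) + s = s * r := by
      rw [← Nat.mul_succ]; congr 1; omega
    have hcardn : (Finset.univ : Finset (Fin n)).card = n :=
      Finset.card_univ.trans (Fintype.card_fin n)
    have h2 : n ≤ s * (r - 1) := by
      rw [← hb2, ← hcardn]
      exact hsum.le.trans hb
    set m := s * (r - 1) with hm
    set p := s * r with hp
    omega
  obtain ⟨t, ht⟩ := hpig
  obtain ⟨F', hF'sub, hF'card⟩ := Finset.exists_subset_card_eq ht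
  refine ⟨F'.orderEmbOfFin hF'card, (F'.orderEmbOfFin hF'card).strictMono, ?_, ?_, ?_⟩
  · exact hu.comp (F'.orderEmbOfFin hF'card).strictMono
  · intro a b hab
    have hmem : ∀ x : Fin r, col (F'.orderEmbOfFin hF'card x) = t := fun x => by
      have := hF'sub (F'.orderEmbOfFin_mem hF'card x)
      simpa using (Finset.mem_filter.mp this).2
    exact key _ _ ((F'.orderEmbOfFin hF'card).strictMono hab)
      ((hmem a).trans (hmem b).symm)
  · intro a b
    exact huv _ _
end
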